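/- Let a, b ∈ ℤ² with det(a,b) = 1 (where det(x,y) = x₁y₂ − x₂y₁). If c ∈ ℤ² satisfies |det(a,c)| = 1 and |det(b,c)| = 1, then c ∈ {a+b, a−b, −a+b, −a−b}; conversely each of these four vectors satisfies both determinant conditions. -/
import Mathlib


/-- The determinant pairing on ℤ², i.e. the algebraic intersection number of
curves on the torus. -/
def detZ2 (x y : ℤ × ℤ) : ℤ := x.1 * y.2 - x.2 * y.1

/-- If det(a,b) = 1, then c satisfies |det(a,c)| = 1 and |det(b,c)| = 1
if and only if c is one of a+b, a−b, −a+b, −a−b. -/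
theorem third_curve_classification (a b : ℤ × ℤ) (hab : detZ2 a b = 1) (c : ℤ × ℤ) :
    (|detZ2 a c| = 1 ∧ |detZ2 b c| = 1) ↔
      (c = a + b ∨ c = a - b ∨ c = -a + b ∨ c = -a - b) := by
  obtain ⟨a1, a2⟩ := a
  obtain ⟨b1, b2⟩ := b
  obtain ⟨c1, c2⟩ := c
  simp only [detZ2, Prod.mk_add_mk, Prod.neg_mk, Prod.mk_sub_mk, Prod.mk.injEq] at *
  constructor
  · rintro ⟨h1, h2⟩
    rw [abs_eq (by norm_num : (0:ℤ) ≤ 1)] at h1 h2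
    have e1 : c1 = -(b1 * c2 - b2 * c1) * a1 + (a1 * c2 - a2 * c1) * b1 := by
      linear_combination (-c1) * hab
    have e2 : c2 = -(b1 * c2 - b2 * c1) * a2 + (a1 * c2 - a2 * c1) * b2 := by
      linear_combination (-c2) * hab
    rcases h1 with h1 | h1 <;> rcases h2 with h2 | h2 <;> rw [h1, h2] at e1 e2 <;> omega
  · rintro (⟨rfl, rfl⟩ | ⟨rfl, rfl⟩ | ⟨rfl, rfl⟩ | ⟨rfl, rfl⟩) <;>
      constructor <;> rw [abs_eq (by norm_num : (0:ℤ) ≤ 1)] <;>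
      first
        | (left; linear_combination hab)
        | (right; linear_combination (-1 : ℤ) * hab)
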